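/- The expected price of firm 1's equilibrium mixed strategy satisfies rho_1* := (integral from L to R of x*g_1(x) dx) + R*a = (R/(Xlo_1*(Xlo_2 - Xhi_2))) * (Xhi_1*Xlo_2*(1 + ln(Xlo_1/Xhi_1)) - Xhi_2*Xlo_1), where L = R*Xhi_1/Xlo_1, g_1(x) = R*Xhi_1*Xlo_2/(Xlo_1*(Xlo_2 - Xhi_2)*x^2), and a = (Xlo_2*Xhi_1 - Xhi_2*Xlo_1)/(Xlo_1*(Xlo_2 - Xhi_2)). -/

import Mathlib

open MeasureTheory

/-- The expected price of firm 1's equilibrium mixed strategy: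
`ρ₁* = (∫_L^R x*g₁(x) dx) + R*a
     = (R/(Xlo₁*(Xlo₂ - Xhi₂))) * (Xhi₁*Xlo₂*(1 + ln(Xlo₁/Xhi₁)) - Xhi₂*Xlo₁)`,
where `L = R*Xhi₁/Xlo₁`, `g₁(x) = R*Xhi₁*Xlo₂/(Xlo₁*(Xlo₂ - Xhi₂)*x²)`, and
`a = (Xlo₂*Xhi₁ - Xhi₂*Xlo₁)/(Xlo₁*(Xlo₂ - Xhi₂))`. -/
theorem firm_one_expected_price
    (R Xlo₁ Xlo₂ Xhi₁ Xhi₂ : ℝ) (hR : 0 < R)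
    (h12 : Xlo₂ ≤ Xlo₁) (hlo2 : 0 < Xlo₂)
    (hhi1 : 0 < Xhi₁) (h1 : Xhi₁ < Xlo₁)
    (hhi2 : 0 < Xhi₂) (h2 : Xhi₂ < Xlo₂)
    (hhi12 : Xhi₂ ≤ Xhi₁) (hcross : Xhi₂ * Xlo₁ ≤ Xhi₁ * Xlo₂)
    (a : ℝ) (ha : a = (Xlo₂ * Xhi₁ - Xhi₂ * Xlo₁) / (Xlo₁ * (Xlo₂ - Xhi₂))) :
    (∫ x in (R * Xhi₁ / Xlo₁)..R,
        x * (R * Xhi₁ * Xlo₂ / (Xlo₁ * (Xlo₂ - Xhi₂) * x ^ 2))) + R * a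
      = R / (Xlo₁ * (Xlo₂ - Xhi₂))
          * (Xhi₁ * Xlo₂ * (1 + Real.log (Xlo₁ / Xhi₁)) - Xhi₂ * Xlo₁) := by
  have hlo1 : 0 < Xlo₁ := lt_trans hhi1 h1
  have hL : 0 < R * Xhi₁ / Xlo₁ := by positivity
  have hd : 0 < Xlo₂ - Xhi₂ := sub_pos.mpr h2
  set c := R * Xhi₁ * Xlo₂ / (Xlo₁ * (Xlo₂ - Xhi₂)) with hc
  have key : ∀ x ∈ Set.uIcc (R * Xhi₁ / Xlo₁) R,
      x * (R * Xhi₁ * Xlo₂ / (Xlo₁ * (Xlo₂ - Xhi₂) * x ^ 2)) = c * x⁻¹ := by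
    intro x hx
    have hx0 : 0 < x := lt_of_lt_of_le (lt_min hL hR) hx.1
    field_simp [hc]
    rw [hc]
    field_simp
  rw [intervalIntegral.integral_congr key, intervalIntegral.integral_const_mul,
    integral_inv_of_pos hL hR]
  have hlog : Real.log (R / (R * Xhi₁ / Xlo₁)) = Real.log (Xlo₁ / Xhi₁) := by
    congr 1
    field_simp
  rw [hlog, ha, hc]
  have hne1 : Xlo₁ ≠ 0 := hlo1.ne'
  have hned : Xlo₂ - Xhi₂ ≠ 0 := hd.ne'
  field_simp
  ring
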